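/- Continuity of reducibility sets: let σ be a sized type, μ a distribution type, ρ a size environment, and p ∈ (0,1]. Then VRed^p_{σ,ρ} = ∩_{0<q<p} VRed^q_{σ,ρ}, DRed^p_{μ,ρ} = ∩_{0<q<p} DRed^q_{μ,ρ}, and TRed^p_{μ,ρ} = ∩_{0<q<p} TRed^q_{μ,ρ}. -/

import Mathlib

open scoped ENNReal

noncomputable section

/-! ### Syntax of the probabilistic λ-calculus λ⊕ (A-normal form) -/

mutual
inductive Val : Type
  | var : ℕ → Val
  | zero : Val
  | succ : Val → Val
  | lam : ℕ → Tm → Val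
  | letrec : ℕ → Val → Val
inductive Tm : Type
  | val : Val → Tm
  | app : Val → Val → Tm
  | letin : ℕ → Tm → Tm → Tm
  | choice : ℝ≥0∞ → Tm → Tm → Tm
  | case : Val → Val → Val → Tm
end

/-- Numerals `S^n 0`. -/
def natVal : ℕ → Val
  | 0 => .zero
  | n + 1 => .succ (natVal n)

mutual
/-- Free variables of a value. -/
def Val.fv : Val → Finset ℕ
  | .var x => {x}
  | .zero => ∅
  | .succ v => Val.fv v
  | .lam x M => (Tm.fv M).erase x
  | .letrec f v => (Val.fv v).erase f
/-- Free variables of a term. -/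
def Tm.fv : Tm → Finset ℕ
  | .val v => Val.fv v
  | .app v w => Val.fv v ∪ Val.fv w
  | .letin x M N => Tm.fv M ∪ (Tm.fv N).erase x
  | .choice _ M N => Tm.fv M ∪ Tm.fv N
  | .case v w z => Val.fv v ∪ Val.fv w ∪ Val.fv z
end

mutual
/-- Well-formedness of a value: all probabilities in choices lie in (0,1). -/
def Val.WFp : Val → Prop
  | .var _ => True
  | .zero => True
  | .succ v => Val.WFp v
  | .lam _ M => Tm.WFp M
  | .letrec _ v => Val.WFp v
/-- Well-formedness of a term: all probabilities in choices lie in (0,1). -/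
def Tm.WFp : Tm → Prop
  | .val v => Val.WFp v
  | .app v w => Val.WFp v ∧ Val.WFp w
  | .letin _ M N => Tm.WFp M ∧ Tm.WFp N
  | .choice p M N => 0 < p ∧ p < 1 ∧ Tm.WFp M ∧ Tm.WFp N
  | .case v w z => Val.WFp v ∧ Val.WFp w ∧ Val.WFp z
end

mutual
/-- Parallel (capture-naive) substitution of values for variables in a value;
intended to be used with closed substituted values only. -/
def Val.psubst : (ℕ → Option Val) → Val → Val
  | ς, .var y => (ς y).getD (.var y)
  | _, .zero => .zero
  | ς, .succ v => .succ (Val.psubst ς v)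
  | ς, .lam y M => .lam y (Tm.psubst (fun z => if z = y then none else ς z) M)
  | ς, .letrec g v => .letrec g (Val.psubst (fun z => if z = g then none else ς z) v)
/-- Parallel substitution in a term. -/
def Tm.psubst : (ℕ → Option Val) → Tm → Tm
  | ς, .val v => .val (Val.psubst ς v)
  | ς, .app v w => .app (Val.psubst ς v) (Val.psubst ς w)
  | ς, .letin y M N =>
      .letin y (Tm.psubst ς M) (Tm.psubst (fun z => if z = y then none else ς z) N)
  | ς, .choice p M N => .choice p (Tm.psubst ς M) (Tm.psubst ς N)
  | ς, .case v w z => .case (Val.psubst ς v) (Val.psubst ς w) (Val.psubst ς z)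
end

/-- Substitution of a single value in a value. -/
def Val.subst1 (x : ℕ) (U : Val) (v : Val) : Val :=
  Val.psubst (fun z => if z = x then some U else none) v

/-- Substitution of a single value in a term. -/
def Tm.subst1 (x : ℕ) (U : Val) (M : Tm) : Tm :=
  Tm.psubst (fun z => if z = x then some U else none) M

/-! ### Distributions -/

/-- (Sub)distributions over `X`. -/
abbrev Distr (X : Type) := X → ℝ≥0∞

/-- The sum `|D|` of a distribution. -/
def Distr.mass {X : Type} (D : Distr X) : ℝ≥0∞ := ∑' x, D x

open Classical in
/-- The Dirac distribution. -/
def Distr.dirac {X : Type} (a : X) : Distr X := fun b => if b = a then 1 else 0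

open Classical in
/-- Pushforward of a distribution. -/
def Distr.map {X Y : Type} (f : X → Y) (D : Distr X) : Distr Y :=
  fun y => ∑' x, if f x = y then D x else 0

/-- Finite distributions. -/
def Distr.FinSupp {X : Type} (D : Distr X) : Prop := {x | D x ≠ 0}.Finite

open Classical in
/-- `[V i ^ pr i | i]` is a (finite) pseudo-representation of `D`. -/
def PseudoRep {X : Type} (D : Distr X) {n : ℕ} (V : Fin n → X) (pr : Fin n → ℝ≥0∞) : Prop :=
  (∀ i, 0 < D (V i)) ∧ ∀ x, D x = ∑ i, if V i = x then pr i else 0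

open Classical in
/-- `[V j ^ pr j | j ∈ J]` is a pseudo-representation of `D` (general countable index). -/
def PseudoRep' {X : Type} (D : Distr X) {J : Type} [Countable J] (V : J → X)
    (pr : J → ℝ≥0∞) : Prop :=
  (∀ j, 0 < D (V j)) ∧ ∀ x, D x = ∑' j, if V j = x then pr j else 0

/-! ### Call-by-value operational semantics -/

open Classical in
/-- One step of call-by-value reduction, as a function from terms to distributions of terms.
Values (and stuck terms) reduce to themselves. -/
def stepFn : Tm → Distr Tm
  | .val v => Distr.dirac (.val v)
  | .app (.lam x M) w => Distr.dirac (Tm.subst1 x w M)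
  | .app (.letrec f v) w =>
      if w = Val.zero ∨ ∃ w', w = Val.succ w' then
        Distr.dirac (.app (Val.subst1 f (.letrec f v) v) w)
      else Distr.dirac (.app (.letrec f v) w)
  | .app v w => Distr.dirac (.app v w)
  | .letin x (.val v) N => Distr.dirac (Tm.subst1 x v N)
  | .letin x M N => Distr.map (fun K => Tm.letin x K N) (stepFn M)
  | .choice p M N => fun L => (if L = M then p else 0) + (if L = N then 1 - p else 0)
  | .case (.succ v) w _ => Distr.dirac (.app w v)
  | .case .zero _ z => Distr.dirac (.val z)
  | .case v w z => Distr.dirac (.case v w z)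

/-- One step of reduction `→ᵥ` on distributions of terms. -/
def stepD (D : Distr Tm) : Distr Tm := fun N => ∑' M, D M * stepFn M N

/-- The distribution obtained from `{M¹}` after `n` steps of `→ᵥ`. -/
def approxT (M : Tm) (n : ℕ) : Distr Tm := stepD^[n] (Distr.dirac M)

/-- `M ⇒ᵥⁿ approxV M n` : restriction to values of the `n`-step reduct of `{M¹}`. -/
def approxV (M : Tm) (n : ℕ) : Distr Val := fun v => approxT M n (.val v)

/-- The semantics `⟦M⟧` of a term: the lub of its value approximants. -/
def sem (M : Tm) : Distr Val := fun v => ⨆ n, approxV M n v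

/-- Almost-sure termination. -/
def Tm.AST (M : Tm) : Prop := Distr.mass (sem M) = 1

/-! ### Affine simple types -/

inductive SimpleTy : Type
  | nat : SimpleTy
  | arrow : SimpleTy → SimpleTy → SimpleTy
deriving DecidableEq

/-- Simple-type contexts. -/
abbrev SCtx := ℕ → Option SimpleTy

def SCtx.empty : SCtx := fun _ => none

def SCtx.ext (Γ : SCtx) (x : ℕ) (κ : SimpleTy) : SCtx := fun z => if z = x then some κ else Γ z

/-- Affine contraction `Γ ⊎ Δ = Ω` : shared variables must have type `Nat`. -/
def AffUnion (Γ Δ Ω : SCtx) : Prop := ∀ x,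
  match Γ x, Δ x with
  | some κ, some κ' => κ = SimpleTy.nat ∧ κ' = SimpleTy.nat ∧ Ω x = some SimpleTy.nat
  | some κ, none => Ω x = some κ
  | none, some κ' => Ω x = some κ'
  | none, none => Ω x = none

/-- Non-affine contraction `Γ ∪ Δ = Ω` : shared variables must have the same type. -/
def ChUnion (Γ Δ Ω : SCtx) : Prop := ∀ x,
  match Γ x, Δ x with
  | some κ, some κ' => κ = κ' ∧ Ω x = some κ
  | some κ, none => Ω x = some κ
  | none, some κ' => Ω x = some κ'
  | none, none => Ω x = none

mutual
/-- Affine simple typing of values (Figure 1). -/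
inductive SimpTyV : SCtx → Val → SimpleTy → Prop
  | var {Γ : SCtx} {x κ} : Γ x = some κ → SimpTyV Γ (.var x) κ
  | zero {Γ : SCtx} : SimpTyV Γ .zero .nat
  | succ {Γ : SCtx} {v} : SimpTyV Γ v .nat → SimpTyV Γ (.succ v) .nat
  | lam {Γ : SCtx} {x M κ κ'} :
      SimpTyT (SCtx.ext Γ x κ) M κ' → SimpTyV Γ (.lam x M) (.arrow κ κ')
  | letrec {Γ : SCtx} {f v κ} :
      (∀ y κ'', Γ y = some κ'' → κ'' = SimpleTy.nat) →
      SimpTyV (SCtx.ext Γ f (.arrow .nat κ)) v (.arrow .nat κ) →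
      SimpTyV Γ (.letrec f v) (.arrow .nat κ)
/-- Affine simple typing of terms (Figure 1). -/
inductive SimpTyT : SCtx → Tm → SimpleTy → Prop
  | val {Γ : SCtx} {v κ} : SimpTyV Γ v κ → SimpTyT Γ (.val v) κ
  | app {Γ Δ Ω : SCtx} {v w κ κ'} :
      AffUnion Γ Δ Ω → SimpTyV Γ v (.arrow κ κ') → SimpTyV Δ w κ →
      SimpTyT Ω (.app v w) κ'
  | letin {Γ Δ Ω : SCtx} {x M N κ κ'} :
      AffUnion Γ Δ Ω → SimpTyT Γ M κ → SimpTyT (SCtx.ext Δ x κ) N κ' →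
      SimpTyT Ω (.letin x M N) κ'
  | choice {Γ Δ Ω : SCtx} {p M N κ} :
      ChUnion Γ Δ Ω → SimpTyT Γ M κ → SimpTyT Δ N κ →
      SimpTyT Ω (.choice p M N) κ
  | case {Γ Δ Ω : SCtx} {v w z κ} :
      AffUnion Γ Δ Ω → SimpTyV Γ v .nat → SimpTyV Δ w (.arrow .nat κ) →
      SimpTyV Δ z κ → SimpTyT Ω (.case v w z) κ
end

/-! ### Sizes -/

inductive Size : Type
  | var : ℕ → Size
  | inf : Size
  | succ : Size → Size
deriving DecidableEq

/-- Size environments. -/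
abbrev SEnv := ℕ → ℕ∞

/-- Interpretation `⟦s⟧_ρ` of a size. -/
def Size.interp (ρ : SEnv) : Size → ℕ∞
  | .var i => ρ i
  | .inf => ⊤
  | .succ s => Size.interp ρ s + 1

/-- The spine variable of a size, if any. -/
def Size.spine : Size → Option ℕ
  | .var i => some i
  | .inf => none
  | .succ s => Size.spine s

/-- Substitution of a size for a size variable. -/
def Size.subst (i : ℕ) (r : Size) : Size → Size
  | .var j => if j = i then r else .var j
  | .inf => .inf
  | .succ s => .succ (Size.subst i r s)

/-- Iterated successor `succ^k s`. -/
def Size.iter : ℕ → Size → Size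
  | 0, s => s
  | k + 1, s => .succ (Size.iter k s)

/-- Occurrence of a size variable in a size. -/
def Size.hasVar (i : ℕ) : Size → Prop
  | .var j => j = i
  | .inf => False
  | .succ s => Size.hasVar i s

/-- The order `≼` on sizes. -/
inductive SizeLE : Size → Size → Prop
  | refl (s) : SizeLE s s
  | trans {s r t} : SizeLE s r → SizeLE r t → SizeLE s t
  | succ (s) : SizeLE s (.succ s)
  | inf (s) : SizeLE s .inf

/-! ### Sized types and distribution types -/

mutual
/-- Sized types. -/
inductive STy : Type
  | nat : Size → STy
  | arrow : STy → DTy → STy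
/-- Distribution types, as finite nonempty formal lists of weighted sized types. -/
inductive DTy : Type
  | single : STy → ℝ≥0∞ → DTy
  | cons : STy → ℝ≥0∞ → DTy → DTy
end

mutual
/-- Underlying simple type of a sized type. -/
def STy.erase : STy → SimpleTy
  | .nat _ => .nat
  | .arrow σ μ => .arrow (STy.erase σ) (DTy.eraseU μ)
/-- Underlying simple type of a distribution type. -/
def DTy.eraseU : DTy → SimpleTy
  | .single σ _ => STy.erase σ
  | .cons σ _ _ => STy.erase σ
end

/-- The list of entries of a distribution type. -/
def DTy.toList : DTy → List (STy × ℝ≥0∞)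
  | .single σ p => [(σ, p)]
  | .cons σ p μ => (σ, p) :: DTy.toList μ

open Classical in
/-- The probability `μ(τ)` assigned by a distribution type to a sized type. -/
def DTy.prob : DTy → STy → ℝ≥0∞
  | .single σ p, τ => if σ = τ then p else 0
  | .cons σ p μ, τ => (if σ = τ then p else 0) + DTy.prob μ τ

/-- The sum `|μ|` of a distribution type. -/
def DTy.mass : DTy → ℝ≥0∞
  | .single _ p => p
  | .cons _ p μ => p + DTy.mass μ

/-- Well-formedness of distribution types: sum at most one, uniform underlying type. -/
def DTy.WF (μ : DTy) : Prop :=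
  DTy.mass μ ≤ 1 ∧ ∀ e ∈ DTy.toList μ, STy.erase e.1 = DTy.eraseU μ

mutual
/-- Size substitution in a sized type. -/
def STy.substSize (i : ℕ) (s : Size) : STy → STy
  | .nat r => .nat (Size.subst i s r)
  | .arrow σ μ => .arrow (STy.substSize i s σ) (DTy.substSize i s μ)
/-- Size substitution in a distribution type. -/
def DTy.substSize (i : ℕ) (s : Size) : DTy → DTy
  | .single σ p => .single (STy.substSize i s σ) p
  | .cons σ p μ => .cons (STy.substSize i s σ) p (DTy.substSize i s μ)
end

mutual
/-- Occurrence of a size variable in a sized type. -/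
def STy.hasVar (i : ℕ) : STy → Prop
  | .nat s => Size.hasVar i s
  | .arrow σ μ => STy.hasVar i σ ∨ DTy.hasVar i μ
/-- Occurrence of a size variable in a distribution type. -/
def DTy.hasVar (i : ℕ) : DTy → Prop
  | .single σ _ => STy.hasVar i σ
  | .cons σ _ μ => STy.hasVar i σ ∨ DTy.hasVar i μ
end

mutual
/-- Positive occurrences of a size variable in a sized type. -/
inductive PosS : ℕ → STy → Prop
  | nat (i s) : PosS i (.nat s)
  | arrow {i σ μ} : NegS i σ → PosD i μ → PosS i (.arrow σ μ)
/-- Negative occurrences of a size variable in a sized type. -/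
inductive NegS : ℕ → STy → Prop
  | nat {i s} : ¬ Size.hasVar i s → NegS i (.nat s)
  | arrow {i σ μ} : PosS i σ → NegD i μ → NegS i (.arrow σ μ)
/-- Positivity for distribution types. -/
inductive PosD : ℕ → DTy → Prop
  | single {i σ p} : PosS i σ → PosD i (.single σ p)
  | cons {i σ p μ} : PosS i σ → PosD i μ → PosD i (.cons σ p μ)
/-- Negativity for distribution types. -/
inductive NegD : ℕ → DTy → Prop
  | single {i σ p} : NegS i σ → NegD i (.single σ p)
  | cons {i σ p μ} : NegS i σ → NegD i μ → NegD i (.cons σ p μ)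
end

open Classical in
mutual
/-- Subtyping of sized types. -/
inductive SubS : STy → STy → Prop
  | refl (σ) : SubS σ σ
  | nat {s r} : SizeLE s r → SubS (.nat s) (.nat r)
  | arrow {σ τ μ ν} : SubS τ σ → SubD μ ν → SubS (.arrow σ μ) (.arrow τ ν)
/-- Subtyping of distribution types. -/
inductive SubD : DTy → DTy → Prop
  | intro (μ ν : DTy) (f : Fin (DTy.toList μ).length → Fin (DTy.toList ν).length) :
      (∀ a, SubS ((DTy.toList μ).get a).1 ((DTy.toList ν).get (f a)).1) →
      (∀ b, (∑ a, if f a = b then ((DTy.toList μ).get a).2 else 0) ≤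
          ((DTy.toList ν).get b).2) →
      SubD μ ν
end

/-- Pointwise order `≼` on distribution types (as distributions of sized types). -/
def DTy.le (μ ν : DTy) : Prop := ∀ τ, DTy.prob μ τ ≤ DTy.prob ν τ

/-- The Dirac distribution type `{σ¹}`. -/
def DTy.diracAt (σ : STy) : DTy := .single σ 1

/-- A distribution type is Dirac if it denotes a Dirac distribution of types. -/
def DTy.IsDirac (μ : DTy) : Prop := ∃ σ, ∀ τ, DTy.prob μ τ = DTy.prob (DTy.diracAt σ) τ

/-- Scaling of a distribution type. -/
def DTy.scale (c : ℝ≥0∞) : DTy → DTy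
  | .single σ p => .single σ (c * p)
  | .cons σ p μ => .cons σ (c * p) (DTy.scale c μ)

/-- Concatenation of distribution types. -/
def DTy.append : DTy → DTy → DTy
  | .single σ p, ν => .cons σ p ν
  | .cons σ p μ, ν => .cons σ p (DTy.append μ ν)

/-- Probabilistic sum `μ ⊕ₚ ν = p·μ + (1-p)·ν` of distribution types. -/
def DTy.mix (p : ℝ≥0∞) (μ ν : DTy) : DTy := DTy.append (DTy.scale p μ) (DTy.scale (1 - p) ν)

/-! ### Sized walks -/

/-- Probabilities of convergence in finite time of the sized walk with jump distribution `g`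
(`g k` = probability to move from `m+1` to `m+k`): `Pr g n m` is the probability to reach `0`
from `m` in at most `n` steps. -/
def Pr (g : ℕ → ℝ≥0∞) : ℕ → ℕ → ℝ≥0∞
  | 0, m => if m = 0 then 1 else 0
  | n + 1, m =>
      if m = 0 then 1
      else (∑' k, g k * Pr g n (m - 1 + k)) + (1 - ∑' k, g k)

/-- A sized walk is almost surely terminating. -/
def WalkAST (g : ℕ → ℝ≥0∞) : Prop := ∀ m, (⨆ n, Pr g n m) = 1

/-- The jump distribution of the sized walk induced by the data `(k_j, p_j)_j`. -/
def inducedWalk (J : List (ℕ × ℝ≥0∞)) : ℕ → ℝ≥0∞ :=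
  fun k => (J.map (fun e => if e.1 = k then e.2 else 0)).sum

/-! ### Monadic affine sized typing (Figure 2) -/

/-- Sized contexts. -/
abbrev SzCtx := ℕ → Option STy

def SzCtx.empty : SzCtx := fun _ => none

def SzCtx.dom (Γ : SzCtx) : Set ℕ := {x | Γ x ≠ none}

def SzCtx.ext (Γ : SzCtx) (x : ℕ) (σ : STy) : SzCtx := fun z => if z = x then some σ else Γ z

def SzCtx.union (Γ Δ : SzCtx) : SzCtx := fun x => (Γ x).orElse (fun _ => Δ x)

/-- Disjointness of sized contexts. -/
def SzDisj (Γ Δ : SzCtx) : Prop := ∀ x, Γ x = none ∨ Δ x = none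

/-- A sized context whose types all refine `Nat`. -/
def SzCtx.natOnly (Γ : SzCtx) : Prop := ∀ x σ, Γ x = some σ → STy.erase σ = SimpleTy.nat

/-- Distribution contexts: at most one variable with a distribution type. -/
abbrev DCtx := Option (ℕ × DTy)

/-- Disjoint join `Θ, Ψ = Ω` of distribution contexts. -/
def DJoin (Θ Ψ Ω : DCtx) : Prop := (Θ = none ∧ Ω = Ψ) ∨ (Ψ = none ∧ Ω = Θ)

/-- Probabilistic sum `Θ ⊕ₚ Ψ = Ω` of distribution contexts. -/
def DChoiceJoin (p : ℝ≥0∞) : DCtx → DCtx → DCtx → Prop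
  | none, none, Ω => Ω = none
  | some (x, μ), none, Ω => Ω = some (x, DTy.scale p μ)
  | none, some (y, ν), Ω => Ω = some (y, DTy.scale (1 - p) ν)
  | some (x, μ), some (y, ν), Ω =>
      x = y ∧ DTy.eraseU μ = DTy.eraseU ν ∧ Ω = some (x, DTy.mix p μ ν)

/-- Weighted sum `∑ᵢ prᵢ · Ψᵢ = Ω` of distribution contexts. -/
def DWeightedSum {n : ℕ} (pr : Fin n → ℝ≥0∞) (Ψ : Fin n → DCtx) (Ω : DCtx) : Prop :=
  ((∀ a, Ψ a = none) ∧ Ω = none) ∨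
  (∃ (y : ℕ) (ν : Fin n → DTy),
    (∀ a, Ψ a = some (y, ν a)) ∧
    (∀ a b, DTy.eraseU (ν a) = DTy.eraseU (ν b)) ∧
    (∑ a, pr a) ≤ 1 ∧
    ∃ ξ : DTy, Ω = some (y, ξ) ∧ ∀ τ, DTy.prob ξ τ = ∑ a, pr a * DTy.prob (ν a) τ)

mutual
/-- Monadic affine sized typing of values (Figure 2). -/
inductive MTyV : SzCtx → DCtx → Val → STy → Prop
  | var {Γ : SzCtx} {Θ x σ} : Γ x = some σ → MTyV Γ Θ (.var x) σ
  | var' {Γ : SzCtx} {x σ} : MTyV Γ (some (x, DTy.diracAt σ)) (.var x) σ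
  | zero {Γ : SzCtx} {Θ s} : MTyV Γ Θ .zero (.nat (.succ s))
  | succ {Γ : SzCtx} {Θ v s} : MTyV Γ Θ v (.nat s) → MTyV Γ Θ (.succ v) (.nat (.succ s))
  | lam {Γ : SzCtx} {Θ x M σ μ} :
      MTyT (SzCtx.ext Γ x σ) Θ M μ → MTyV Γ Θ (.lam x M) (.arrow σ μ)
  | sub {Γ : SzCtx} {Θ v σ τ} : MTyV Γ Θ v σ → SubS σ τ → MTyV Γ Θ v τ
  | letrec {Γ Δ : SzCtx} {Θ f v} {i : ℕ} {ν : DTy} {J : List (ℕ × ℝ≥0∞)} {μ : DTy} {r : Size} :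
      SzCtx.natOnly Γ → SzDisj Γ Δ → Γ f = none →
      (∀ x σ, Γ x = some σ → ¬ STy.hasVar i σ) →
      PosD i ν →
      DTy.toList μ = J.map (fun e =>
        (STy.arrow (.nat (Size.iter e.1 (.var i)))
          (DTy.substSize i (Size.iter e.1 (.var i)) ν), e.2)) →
      WalkAST (inducedWalk J) →
      MTyV Γ (some (f, μ)) v
        (.arrow (.nat (.succ (.var i))) (DTy.substSize i (.succ (.var i)) ν)) →
      MTyV (SzCtx.union Γ Δ) Θ (.letrec f v) (.arrow (.nat r) (DTy.substSize i r ν))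
/-- Monadic affine sized typing of terms (Figure 2). -/
inductive MTyT : SzCtx → DCtx → Tm → DTy → Prop
  | val {Γ : SzCtx} {Θ v σ} : MTyV Γ Θ v σ → MTyT Γ Θ (.val v) (DTy.diracAt σ)
  | sub {Γ : SzCtx} {Θ M μ ν} : MTyT Γ Θ M μ → SubD μ ν → MTyT Γ Θ M ν
  | app {Γ Δ Ξ : SzCtx} {Θ Ψ Ω : DCtx} {v w σ μ} :
      SzCtx.natOnly Γ → SzDisj Γ Δ → SzDisj Γ Ξ → SzDisj Δ Ξ →
      DJoin Θ Ψ Ω →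
      MTyV (SzCtx.union Γ Δ) Θ v (.arrow σ μ) →
      MTyV (SzCtx.union Γ Ξ) Ψ w σ →
      MTyT (SzCtx.union Γ (SzCtx.union Δ Ξ)) Ω (.app v w) μ
  | choice {Γ : SzCtx} {Θ Ψ Ω : DCtx} {p M N μ ν} :
      0 < p → p < 1 → DTy.eraseU μ = DTy.eraseU ν →
      DChoiceJoin p Θ Ψ Ω →
      MTyT Γ Θ M μ → MTyT Γ Ψ N ν →
      MTyT Γ Ω (.choice p M N) (DTy.mix p μ ν)
  | letin {Γ Δ Ξ : SzCtx} {Θ : DCtx} {x M N} {μ : DTy}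
      {νf : Fin (DTy.toList μ).length → DTy}
      {Ψ : Fin (DTy.toList μ).length → DCtx} {Ω₀ Ω : DCtx} {ξ : DTy} :
      SzCtx.natOnly Γ → SzDisj Γ Δ → SzDisj Γ Ξ → SzDisj Δ Ξ →
      MTyT (SzCtx.union Γ Δ) Θ M μ →
      (∀ a, MTyT (SzCtx.ext (SzCtx.union Γ Ξ) x ((DTy.toList μ).get a).1) (Ψ a) N (νf a)) →
      DWeightedSum (fun a => ((DTy.toList μ).get a).2) Ψ Ω₀ →
      DJoin Θ Ω₀ Ω →
      (∀ τ, DTy.prob ξ τ = ∑ a, ((DTy.toList μ).get a).2 * DTy.prob (νf a) τ) →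
      MTyT (SzCtx.union Γ (SzCtx.union Δ Ξ)) Ω (.letin x M N) ξ
  | case {Γ Δ : SzCtx} {Θ : DCtx} {v w z s μ} :
      SzDisj Γ Δ →
      MTyV Γ none v (.nat (.succ s)) →
      MTyV Δ Θ w (.arrow (.nat s) μ) →
      MTyT Δ Θ (.val z) μ →
      MTyT (SzCtx.union Γ Δ) Θ (.case v w z) μ
end

/-! ### Reducibility sets -/

/-- Builder `DRed` from a family of value reducibility sets. -/
def mkDRed (vred : STy → ℝ≥0∞ → Set Val) (μ : DTy) (p : ℝ≥0∞) : Set (Distr Val) :=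
  { D | Distr.FinSupp D ∧
    ∃ (n : ℕ) (V : Fin n → Val) (pr : Fin n → ℝ≥0∞),
      PseudoRep D V pr ∧
      ∃ pm qm : Fin n → Fin (DTy.toList μ).length → ℝ≥0∞,
        (∀ a b, pm a b ≤ 1) ∧ (∀ a b, qm a b ≤ 1) ∧
        (∀ a b, V a ∈ vred ((DTy.toList μ).get b).1 (qm a b)) ∧
        (∀ a, (∑ b, pm a b) = pr a) ∧
        (∀ b, (∑ a, pm a b) = ((DTy.toList μ).get b).2) ∧
        p ≤ ∑ a, ∑ b, qm a b * pm a b }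

/-- Builder `TRed` from a family of value reducibility sets. -/
def mkTRed (κ : SimpleTy) (vred : STy → ℝ≥0∞ → Set Val) (μ : DTy) (p : ℝ≥0∞) : Set Tm :=
  { M | SimpTyT SCtx.empty M κ ∧
    ∀ r < p, ∃ ν : DTy, DTy.le ν μ ∧ (∀ e ∈ DTy.toList ν, STy.erase e.1 = κ) ∧
      ∃ n : ℕ, approxV M n ∈ mkDRed vred ν r }

/-- The reducibility sets of values, by induction on the underlying simple type. -/
def VRed : SimpleTy → STy → SEnv → ℝ≥0∞ → Set Val
  | .nat, .nat s, ρ, p =>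
      { v | ∃ n : ℕ, v = natVal n ∧ (0 < p → (n : ℕ∞) < Size.interp ρ s) }
  | .nat, _, _, _ => ∅
  | .arrow κ κ', .arrow σ' μ, ρ, p =>
      { v | SimpTyV SCtx.empty v (.arrow κ κ') ∧
        ∀ q : ℝ≥0∞, 0 < q → q ≤ 1 → ∀ w ∈ VRed κ σ' ρ q,
          Tm.app v w ∈ mkTRed κ' (fun τ r => VRed κ' τ ρ r) μ (p * q) }
  | .arrow _ _, _, _, _ => ∅

/-- `VRed^p_{σ,ρ}`. -/
def VRedS (σ : STy) (ρ : SEnv) (p : ℝ≥0∞) : Set Val := VRed (STy.erase σ) σ ρ p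

/-- `DRed^p_{μ,ρ}`. -/
def DRedS (μ : DTy) (ρ : SEnv) (p : ℝ≥0∞) : Set (Distr Val) :=
  mkDRed (fun τ r => VRed (DTy.eraseU μ) τ ρ r) μ p

/-- `TRed^p_{μ,ρ}`. -/
def TRedS (μ : DTy) (ρ : SEnv) (p : ℝ≥0∞) : Set Tm :=
  mkTRed (DTy.eraseU μ) (fun τ r => VRed (DTy.eraseU μ) τ ρ r) μ p

/-! ### Open reducibility sets -/

/-- Product of the degrees over the domain of a (finite-domain) sized context. -/
def ctxProd (Γ : SzCtx) (q : ℕ → ℝ≥0∞) : ℝ≥0∞ := ∏ᶠ x ∈ SzCtx.dom Γ, q x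

/-- `TRed^{Γ|Θ}_{μ,ρ}` : reducibility for open terms. -/
def TRedOpen (Γ : SzCtx) (Θ : DCtx) (μ : DTy) (ρ : SEnv) : Set Tm :=
  match Θ with
  | none =>
    { M | ∀ (q : ℕ → ℝ≥0∞) (v : ℕ → Val),
        (∀ x, q x ≤ 1) →
        (∀ x σ, Γ x = some σ → v x ∈ VRedS σ ρ (q x)) →
        Tm.psubst (fun z => (Γ z).map (fun _ => v z)) M ∈ TRedS μ ρ (ctxProd Γ q) }
  | some (y, τd) =>
    { M | ∀ (q : ℕ → ℝ≥0∞) (v : ℕ → Val)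
        (q' : Fin (DTy.toList τd).length → ℝ≥0∞) (W : Val),
        (∀ x, q x ≤ 1) →
        (∀ x σ, Γ x = some σ → v x ∈ VRedS σ ρ (q x)) →
        (∀ b, q' b ≤ 1) →
        (∀ b, W ∈ VRedS ((DTy.toList τd).get b).1 ρ (q' b)) →
        Tm.psubst (fun z => if z = y then some W else (Γ z).map (fun _ => v z)) M
          ∈ TRedS μ ρ (ctxProd Γ q *
              ((∑ b, ((DTy.toList τd).get b).2 * q' b) +
                (1 - ∑ b, ((DTy.toList τd).get b).2))) }

/-- `VRed^{Γ|Θ}_{σ,ρ}` : reducibility for open values. -/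
def VRedOpen (Γ : SzCtx) (Θ : DCtx) (σ : STy) (ρ : SEnv) : Set Val :=
  match Θ with
  | none =>
    { V | ∀ (q : ℕ → ℝ≥0∞) (v : ℕ → Val),
        (∀ x, q x ≤ 1) →
        (∀ x τ, Γ x = some τ → v x ∈ VRedS τ ρ (q x)) →
        Val.psubst (fun z => (Γ z).map (fun _ => v z)) V ∈ VRedS σ ρ (ctxProd Γ q) }
  | some (y, τd) =>
    { V | ∀ (q : ℕ → ℝ≥0∞) (v : ℕ → Val)
        (q' : Fin (DTy.toList τd).length → ℝ≥0∞) (W : Val),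
        (∀ x, q x ≤ 1) →
        (∀ x τ, Γ x = some τ → v x ∈ VRedS τ ρ (q x)) →
        (∀ b, q' b ≤ 1) →
        (∀ b, W ∈ VRedS ((DTy.toList τd).get b).1 ρ (q' b)) →
        Val.psubst (fun z => if z = y then some W else (Γ z).map (fun _ => v z)) V
          ∈ VRedS σ ρ (ctxProd Γ q *
              ((∑ b, ((DTy.toList τd).get b).2 * q' b) +
                (1 - ∑ b, ((DTy.toList τd).get b).2))) }

/-- `n`-unfolding of `letrec f = W`. -/
def unfold : ℕ → ℕ → Val → Val
  | 0, f, W => .letrec f W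
  | n + 1, f, W => Val.subst1 f (unfold n f W) W

end


/-! ### Auxiliary lemmas for continuity -/

section ContinuityAux

open Filter Topology

private lemma mkTRed_anti {κ : SimpleTy} {vred : STy → ℝ≥0∞ → Set Val} {μ : DTy}
    {p q : ℝ≥0∞} (h : q ≤ p) : mkTRed κ vred μ p ⊆ mkTRed κ vred μ q := by
  intro M hM
  exact ⟨hM.1, fun r hr => hM.2 r (lt_of_lt_of_le hr h)⟩

private lemma mkDRed_anti {vred : STy → ℝ≥0∞ → Set Val} {μ : DTy}
    {p q : ℝ≥0∞} (h : q ≤ p) : mkDRed vred μ p ⊆ mkDRed vred μ q := by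
  rintro D ⟨hfin, n, V, pr, hrep, pm, qm, h1, h2, h3, h4, h5, h6⟩
  exact ⟨hfin, n, V, pr, hrep, pm, qm, h1, h2, h3, h4, h5, le_trans h h6⟩

private lemma VRed_anti (κ : SimpleTy) (σ : STy) (ρ : SEnv) {p q : ℝ≥0∞} (h : q ≤ p) :
    VRed κ σ ρ p ⊆ VRed κ σ ρ q := by
  match κ, σ with
  | .nat, .nat s =>
    rintro v hv
    simp only [VRed, Set.mem_setOf_eq] at hv ⊢
    obtain ⟨n, rfl, hn⟩ := hv
    exact ⟨n, rfl, fun hq => hn (hq.trans_le h)⟩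
  | .nat, .arrow _ _ => intro v hv; simp only [VRed] at hv; exact hv.elim
  | .arrow _ _, .nat _ => intro v hv; simp only [VRed] at hv; exact hv.elim
  | .arrow κ κ', .arrow σ' μ' =>
    intro v hv
    simp only [VRed, Set.mem_setOf_eq] at hv ⊢
    exact ⟨hv.1, fun q' hq0 hq1 w hw =>
      mkTRed_anti (mul_le_mul_of_nonneg_right h zero_le) (hv.2 q' hq0 hq1 w hw)⟩

private lemma VRed_inter (κ : SimpleTy) (σ : STy) (ρ : SEnv) {p : ℝ≥0∞}
    (h0 : 0 < p) (h1 : p ≠ ⊤) {v : Val}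
    (h : ∀ q ∈ Set.Ioo (0:ℝ≥0∞) p, v ∈ VRed κ σ ρ q) : v ∈ VRed κ σ ρ p := by
  obtain ⟨q0, hq00, hq0p⟩ : ∃ q0, 0 < q0 ∧ q0 < p :=
    ⟨p/2, ENNReal.half_pos h0.ne', ENNReal.half_lt_self h0.ne' h1⟩
  have h0mem := h q0 ⟨hq00, hq0p⟩
  match κ, σ with
  | .nat, .nat s =>
    simp only [VRed, Set.mem_setOf_eq] at h0mem ⊢
    obtain ⟨n, rfl, hn⟩ := h0mem
    exact ⟨n, rfl, fun _ => hn hq00⟩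
  | .nat, .arrow _ _ => simp only [VRed] at h0mem; exact h0mem.elim
  | .arrow _ _, .nat _ => simp only [VRed] at h0mem; exact h0mem.elim
  | .arrow κ κ', .arrow σ' μ' =>
    simp only [VRed, Set.mem_setOf_eq] at h0mem ⊢
    refine ⟨h0mem.1, fun q' hq'0 hq'1 w hw => ?_⟩
    refine ⟨(h0mem.2 q' hq'0 hq'1 w hw).1, fun r hr => ?_⟩
    have hq't : q' ≠ ⊤ := (hq'1.trans_lt ENNReal.one_lt_top).ne
    have hrp : r / q' < p := (ENNReal.div_lt_iff (Or.inl hq'0.ne') (Or.inl hq't)).2 hr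
    obtain ⟨q, hq1, hq2⟩ := exists_between hrp
    have hqpos : (0:ℝ≥0∞) < q := lt_of_le_of_lt zero_le hq1
    have hrq : r < q * q' := (ENNReal.div_lt_iff (Or.inl hq'0.ne') (Or.inl hq't)).1 hq1
    have hm := h q ⟨hqpos, hq2⟩
    simp only [VRed, Set.mem_setOf_eq] at hm
    exact (hm.2 q' hq'0 hq'1 w hw).2 r hrq

private lemma mkTRed_inter (κ : SimpleTy) (vred : STy → ℝ≥0∞ → Set Val) (μ : DTy)
    {p : ℝ≥0∞} (h0 : 0 < p) (h1 : p ≠ ⊤) {M : Tm}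
    (h : ∀ q ∈ Set.Ioo (0:ℝ≥0∞) p, M ∈ mkTRed κ vred μ q) : M ∈ mkTRed κ vred μ p := by
  refine ⟨(h (p/2) ⟨ENNReal.half_pos h0.ne', ENNReal.half_lt_self h0.ne' h1⟩).1,
    fun r hr => ?_⟩
  obtain ⟨q, hq1, hq2⟩ := exists_between hr
  exact (h q ⟨lt_of_le_of_lt zero_le hq1, hq2⟩).2 r hq1

private lemma entry_le_mass : ∀ (μ : DTy) (b : Fin (DTy.toList μ).length),
    ((DTy.toList μ).get b).2 ≤ DTy.mass μ
  | .single σ p, b => by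
      obtain ⟨i, hi⟩ := b
      simp [DTy.toList] at hi
      subst hi
      simp [DTy.toList, DTy.mass]
  | .cons σ p ν, b => by
      cases b using Fin.cases with
      | zero => simp [DTy.toList, DTy.mass, le_self_add]
      | succ i =>
          simp only [DTy.toList, DTy.mass, List.get_eq_getElem, List.getElem_cons_succ]
          exact le_add_left (entry_le_mass ν i)

private lemma mkDRed_canon {vred : STy → ℝ≥0∞ → Set Val} {μ : DTy} (hμ : DTy.mass μ ≤ 1)
    {D : Distr Val} {m : ℕ} {V' : Fin m → Val} (hinj : Function.Injective V')
    (hsupp : ∀ x, 0 < D x ↔ ∃ i, V' i = x)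
    {q : ℝ≥0∞} (hD : D ∈ mkDRed vred μ q) :
    ∃ pm qm : Fin m → Fin (DTy.toList μ).length → ℝ≥0∞,
      (∀ a b, pm a b ≤ 1) ∧ (∀ a b, qm a b ≤ 1) ∧
      (∀ a b, V' a ∈ vred ((DTy.toList μ).get b).1 (qm a b)) ∧
      (∀ a, (∑ b, pm a b) = D (V' a)) ∧
      (∀ b, (∑ a, pm a b) = ((DTy.toList μ).get b).2) ∧
      q ≤ ∑ a, ∑ b, qm a b * pm a b := by
  classical
  obtain ⟨hfin, n, V, pr, ⟨hpos, hrep⟩, pm, qm, hpm1, hqm1, hmem, hrow, hcol, hsum⟩ := hD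
  have hcls : ∀ a : Fin n, ∃! x : Fin m, V' x = V a := by
    intro a
    obtain ⟨x, hx⟩ := (hsupp (V a)).1 (hpos a)
    exact ⟨x, hx, fun y hy => hinj (hy.trans hx.symm)⟩
  set S : Fin m → Finset (Fin n) := fun x => Finset.univ.filter (fun a => V a = V' x) with hS
  have hpart : ∀ g : Fin n → ℝ≥0∞, (∑ x, ∑ a ∈ S x, g a) = ∑ a, g a := by
    intro g
    have hfe : ∀ x, (∑ a ∈ S x, g a) = ∑ a, if V a = V' x then g a else 0 := fun x =>
      Finset.sum_filter _ _
    simp only [hfe]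
    rw [Finset.sum_comm]
    refine Finset.sum_congr rfl fun a _ => ?_
    obtain ⟨x₀, hx₀, hx₀u⟩ := hcls a
    rw [Finset.sum_eq_single x₀]
    · rw [if_pos hx₀.symm]
    · intro x _ hxne
      rw [if_neg]
      exact fun hEq => hxne (hx₀u x hEq.symm)
    · intro hx; exact absurd (Finset.mem_univ x₀) hx
  have hSne : ∀ x, (S x).Nonempty := by
    intro x
    by_contra hne
    have hzero : ∀ a : Fin n, (if V a = V' x then pr a else 0) = 0 := by
      intro a
      rw [if_neg]
      intro hEq
      exact hne ⟨a, Finset.mem_filter.2 ⟨Finset.mem_univ a, hEq⟩⟩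
    have hx : 0 < D (V' x) := (hsupp (V' x)).2 ⟨x, rfl⟩
    rw [hrep (V' x)] at hx
    simp only [hzero, Finset.sum_const_zero] at hx
    exact lt_irrefl _ hx
  have hcol' : ∀ b, (∑ x, ∑ a ∈ S x, pm a b) = ((DTy.toList μ).get b).2 := fun b =>
    (hpart _).trans (hcol b)
  have hrow' : ∀ x, (∑ b, ∑ a ∈ S x, pm a b) = D (V' x) := by
    intro x
    rw [Finset.sum_comm, Finset.sum_congr rfl (fun a _ => hrow a), hrep (V' x),
      ← Finset.sum_filter]
  refine ⟨fun x b => ∑ a ∈ S x, pm a b, fun x b => (S x).sup (fun a => qm a b),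
    ?_, ?_, ?_, hrow', hcol', ?_⟩
  · intro x b
    calc (∑ a ∈ S x, pm a b) ≤ ∑ x', ∑ a ∈ S x', pm a b :=
          Finset.single_le_sum (f := fun x' => ∑ a ∈ S x', pm a b)
            (fun y _ => zero_le) (Finset.mem_univ x)
      _ = ((DTy.toList μ).get b).2 := hcol' b
      _ ≤ DTy.mass μ := entry_le_mass μ b
      _ ≤ 1 := hμ
  · intro x b
    exact Finset.sup_le fun a _ => hqm1 a b
  · intro x b
    obtain ⟨a, ha, hEq⟩ := Finset.exists_mem_eq_sup (S x) (hSne x) (fun a => qm a b)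
    have hVa : V a = V' x := (Finset.mem_filter.1 ha).2
    show V' x ∈ vred ((DTy.toList μ).get b).1 ((S x).sup fun a => qm a b)
    rw [hEq, ← hVa]
    exact hmem a b
  · calc q ≤ ∑ a, ∑ b, qm a b * pm a b := hsum
      _ = ∑ x, ∑ a ∈ S x, ∑ b, qm a b * pm a b := (hpart _).symm
      _ = ∑ x, ∑ b, ∑ a ∈ S x, qm a b * pm a b :=
          Finset.sum_congr rfl fun x _ => Finset.sum_comm
      _ ≤ ∑ x, ∑ b, ((S x).sup fun a => qm a b) * ∑ a ∈ S x, pm a b := by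
          refine Finset.sum_le_sum fun x _ => Finset.sum_le_sum fun b _ => ?_
          rw [Finset.mul_sum]
          exact Finset.sum_le_sum fun a ha =>
            mul_le_mul_of_nonneg_right (Finset.le_sup (f := fun a => qm a b) ha) zero_le

private lemma DRed_inter (μ : DTy) (ρ : SEnv) (hμ : DTy.mass μ ≤ 1) {p : ℝ≥0∞}
    (h0 : 0 < p) (h1 : p ≤ 1) {D : Distr Val}
    (h : ∀ q ∈ Set.Ioo (0:ℝ≥0∞) p, D ∈ DRedS μ ρ q) : D ∈ DRedS μ ρ p := by
  classical
  have hpt : p ≠ ⊤ := (h1.trans_lt ENNReal.one_lt_top).ne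
  have hfin : Distr.FinSupp D :=
    (h (p/2) ⟨ENNReal.half_pos h0.ne', ENNReal.half_lt_self h0.ne' hpt⟩).1
  set s : Finset Val := hfin.toFinset with hs
  set m := s.card with hm
  set V' : Fin m → Val := fun i => (s.equivFin.symm i : Val) with hV'
  have hinj : Function.Injective V' := fun i j hij =>
    s.equivFin.symm.injective (Subtype.ext hij)
  have hsupp : ∀ x, 0 < D x ↔ ∃ i, V' i = x := by
    intro x
    constructor
    · intro hx
      have hxs : x ∈ s := hfin.mem_toFinset.2 hx.ne'
      exact ⟨s.equivFin ⟨x, hxs⟩, by simp [hV']⟩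
    · rintro ⟨i, rfl⟩
      have hi : (V' i) ∈ s := (s.equivFin.symm i).2
      exact pos_iff_ne_zero.2 (hfin.mem_toFinset.1 hi)
  -- a sequence approaching p from below
  set qk : ℕ → ℝ≥0∞ := fun k => p - p / ((k:ℝ≥0∞) + 2) with hqk
  have hdivne : ∀ k : ℕ, p / ((k:ℝ≥0∞) + 2) ≠ 0 := by
    intro k hEq
    rcases ENNReal.div_eq_zero_iff.1 hEq with h' | h'
    · exact h0.ne' h'
    · exact (by simp : ((k:ℝ≥0∞)+2) ≠ ⊤) h'
  have hqkpos : ∀ k, 0 < qk k := by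
    intro k
    apply tsub_pos_iff_lt.2
    calc p / ((k:ℝ≥0∞)+2) ≤ p / 2 := by
          gcongr
          exact le_add_self
      _ < p := ENNReal.half_lt_self h0.ne' hpt
  have hqklt : ∀ k, qk k < p := fun k => ENNReal.sub_lt_self hpt h0.ne' (hdivne k)
  have hqktd : Tendsto qk atTop (𝓝 p) := by
    have hinv : Tendsto (fun k : ℕ => p / ((k:ℝ≥0∞) + 2)) atTop (𝓝 0) := by
      apply tendsto_of_tendsto_of_tendsto_of_le_of_le (g := fun _ => (0:ℝ≥0∞))
        (h := fun k : ℕ => ((k:ℝ≥0∞))⁻¹ * p) tendsto_const_nhds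
      · simpa using ENNReal.Tendsto.mul_const ENNReal.tendsto_inv_nat_nhds_zero (Or.inr hpt)
      · intro k; exact zero_le
      · intro k
        show p / ((k:ℝ≥0∞) + 2) ≤ ((k:ℝ≥0∞))⁻¹ * p
        rw [div_eq_mul_inv, mul_comm]
        gcongr
        exact le_self_add
    have := ENNReal.Tendsto.sub (tendsto_const_nhds (x := p)) hinv (Or.inl hpt)
    simpa using this
  -- canonical witnesses for each k
  have hW := fun k : ℕ =>
    mkDRed_canon hμ hinj hsupp (h (qk k) ⟨hqkpos k, hqklt k⟩)
  choose pm qm hpm1 hqm1 hmem hrow hcol hsum using hW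
  -- compactness: extract convergent subsequences
  obtain ⟨Lpm, -, φ1, hφ1, hpmtd⟩ :=
    IsCompact.tendsto_subseq (x := pm) isCompact_univ (fun k => Set.mem_univ _)
  obtain ⟨Lqm, -, φ2, hφ2, hqmtd⟩ :=
    IsCompact.tendsto_subseq (x := fun k => qm (φ1 k)) isCompact_univ
      (fun k => Set.mem_univ _)
  set ψ : ℕ → ℕ := φ1 ∘ φ2 with hψ
  have hψtd : Tendsto ψ atTop atTop := (hφ1.comp hφ2).tendsto_atTop
  have hpmtd' : Tendsto (fun k => pm (ψ k)) atTop (𝓝 Lpm) :=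
    hpmtd.comp hφ2.tendsto_atTop
  have hqmtd' : Tendsto (fun k => qm (ψ k)) atTop (𝓝 Lqm) := hqmtd
  have hpmpt : ∀ x b, Tendsto (fun k => pm (ψ k) x b) atTop (𝓝 (Lpm x b)) := fun x b =>
    (tendsto_pi_nhds.1 ((tendsto_pi_nhds.1 hpmtd') x)) b
  have hqmpt : ∀ x b, Tendsto (fun k => qm (ψ k) x b) atTop (𝓝 (Lqm x b)) := fun x b =>
    (tendsto_pi_nhds.1 ((tendsto_pi_nhds.1 hqmtd') x)) b
  have hLpm1 : ∀ x b, Lpm x b ≤ 1 := fun x b =>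
    le_of_tendsto' (hpmpt x b) (fun k => hpm1 (ψ k) x b)
  have hLqm1 : ∀ x b, Lqm x b ≤ 1 := fun x b =>
    le_of_tendsto' (hqmpt x b) (fun k => hqm1 (ψ k) x b)
  have hLrow : ∀ x, (∑ b, Lpm x b) = D (V' x) := by
    intro x
    have h1' : Tendsto (fun k => ∑ b, pm (ψ k) x b) atTop (𝓝 (∑ b, Lpm x b)) :=
      tendsto_finset_sum _ (fun b _ => hpmpt x b)
    have h2' : Tendsto (fun k => ∑ b, pm (ψ k) x b) atTop (𝓝 (D (V' x))) := by
      have hc : (fun k => ∑ b, pm (ψ k) x b) = fun _ => D (V' x) :=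
        funext fun k => hrow (ψ k) x
      rw [hc]; exact tendsto_const_nhds
    exact tendsto_nhds_unique h1' h2'
  have hLcol : ∀ b, (∑ x, Lpm x b) = ((DTy.toList μ).get b).2 := by
    intro b
    have h1' : Tendsto (fun k => ∑ x, pm (ψ k) x b) atTop (𝓝 (∑ x, Lpm x b)) :=
      tendsto_finset_sum _ (fun x _ => hpmpt x b)
    have h2' : Tendsto (fun k => ∑ x, pm (ψ k) x b) atTop
        (𝓝 (((DTy.toList μ).get b).2)) := by
      have hc : (fun k => ∑ x, pm (ψ k) x b) = fun _ => ((DTy.toList μ).get b).2 :=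
        funext fun k => hcol (ψ k) b
      rw [hc]; exact tendsto_const_nhds
    exact tendsto_nhds_unique h1' h2'
  have hLmem : ∀ x b, V' x ∈ VRed (DTy.eraseU μ) ((DTy.toList μ).get b).1 ρ (Lqm x b) := by
    intro x b
    rcases eq_or_lt_of_le (zero_le : 0 ≤ Lqm x b) with hz | hpos'
    · refine VRed_anti _ _ _ ?_ (hmem (ψ 0) x b)
      rw [← hz]; exact zero_le
    · apply VRed_inter _ _ _ hpos' ((hLqm1 x b).trans_lt ENNReal.one_lt_top).ne
      intro q' hq'
      have hev : ∀ᶠ k in atTop, q' < qm (ψ k) x b :=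
        (hqmpt x b).eventually (eventually_gt_nhds hq'.2)
      obtain ⟨k, hk⟩ := hev.exists
      exact VRed_anti _ _ _ hk.le (hmem (ψ k) x b)
  have hLsum : p ≤ ∑ x, ∑ b, Lqm x b * Lpm x b := by
    have hT : Tendsto (fun k => ∑ x, ∑ b, qm (ψ k) x b * pm (ψ k) x b) atTop
        (𝓝 (∑ x, ∑ b, Lqm x b * Lpm x b)) := by
      refine tendsto_finset_sum _ fun x _ => tendsto_finset_sum _ fun b _ => ?_
      exact ENNReal.Tendsto.mul (hqmpt x b)
        (Or.inr ((hLpm1 x b).trans_lt ENNReal.one_lt_top).ne) (hpmpt x b)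
        (Or.inr ((hLqm1 x b).trans_lt ENNReal.one_lt_top).ne)
    have hQ : Tendsto (fun k => qk (ψ k)) atTop (𝓝 p) := hqktd.comp hψtd
    exact le_of_tendsto_of_tendsto' hQ hT (fun k => hsum (ψ k))
  have hrepD : ∀ x, D x = ∑ i, if V' i = x then D (V' i) else 0 := by
    intro x
    by_cases hx : 0 < D x
    · obtain ⟨i₀, hi₀⟩ := (hsupp x).1 hx
      rw [Finset.sum_eq_single i₀]
      · rw [if_pos hi₀, hi₀]
      · intro i _ hne
        rw [if_neg]
        exact fun hEq => hne (hinj (hEq.trans hi₀.symm))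
      · intro hi; exact absurd (Finset.mem_univ i₀) hi
    · have hx0 : D x = 0 := by
        rcases eq_or_ne (D x) 0 with h' | h'
        · exact h'
        · exact absurd (pos_iff_ne_zero.2 h') hx
      rw [hx0]
      symm
      apply Finset.sum_eq_zero
      intro i _
      rw [if_neg]
      exact fun hEq => hx ((hsupp x).2 ⟨i, hEq⟩)
  exact ⟨hfin, m, V', fun x => D (V' x),
    ⟨fun i => (hsupp (V' i)).2 ⟨i, rfl⟩, hrepD⟩,
    Lpm, Lqm, hLpm1, hLqm1, hLmem, hLrow, hLcol, hLsum⟩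

end ContinuityAux

/-- Continuity of reducibility sets: for `p ∈ (0,1]`,
`VRed^p_{σ,ρ} = ⋂_{0<q<p} VRed^q_{σ,ρ}`, `DRed^p_{μ,ρ} = ⋂_{0<q<p} DRed^q_{μ,ρ}`, and
`TRed^p_{μ,ρ} = ⋂_{0<q<p} TRed^q_{μ,ρ}`. -/
theorem continuity_of_reducibility (σ : STy) (μ : DTy) (ρ : SEnv) (p : ℝ≥0∞)
    (hμ : DTy.WF μ) (h0 : 0 < p) (h1 : p ≤ 1) :
    (VRedS σ ρ p = ⋂ q ∈ Set.Ioo (0 : ℝ≥0∞) p, VRedS σ ρ q) ∧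
    (DRedS μ ρ p = ⋂ q ∈ Set.Ioo (0 : ℝ≥0∞) p, DRedS μ ρ q) ∧
    (TRedS μ ρ p = ⋂ q ∈ Set.Ioo (0 : ℝ≥0∞) p, TRedS μ ρ q) := by
  have hpt : p ≠ ⊤ := (h1.trans_lt ENNReal.one_lt_top).ne
  refine ⟨?_, ?_, ?_⟩
  · ext v
    simp only [Set.mem_iInter]
    constructor
    · intro hv q hq
      exact VRed_anti _ _ _ hq.2.le hv
    · intro hv
      exact VRed_inter _ _ _ h0 hpt (fun q hq => hv q hq)
  · ext D
    simp only [Set.mem_iInter]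
    constructor
    · intro hD q hq
      exact mkDRed_anti hq.2.le hD
    · intro hD
      exact DRed_inter μ ρ hμ.1 h0 h1 (fun q hq => hD q hq)
  · ext M
    simp only [Set.mem_iInter]
    constructor
    · intro hM q hq
      exact mkTRed_anti hq.2.le hM
    · intro hM
      exact mkTRed_inter _ _ _ h0 hpt (fun q hq => hM q hq)
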